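/- arXiv:1708.02797 — 2 statements merged into one kernel-verified Lean document; each statement's English description precedes it below -/
import Mathlib

section
/- Let L/k be a Galois field extension (possibly infinite) with Galois group G, and let V be a k-vector space, with G acting on the base change V ⊗_k L by g · (v ⊗ a) = v ⊗ g(a). Then the canonical k-linear map V → V ⊗_k L, v ↦ v ⊗ 1, is injective and its image is exactly the subspace (V ⊗_k L)^G of G-invariant elements. -/
open TensorProduct Polynomial

private lemma aux_fixed_mem {k L : Type*} [Field k] [Field L] [Algebra k L] [IsGalois k L]
    {x : L} (hx : ∀ σ : L ≃ₐ[k] L, σ x = x) : ∃ a : k, algebraMap k L a = x := by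
  classical
  have hint : IsIntegral k x := Algebra.IsIntegral.isIntegral x
  have hsep : (minpoly k x).Separable := Algebra.IsSeparable.isSeparable k x
  have hsplit : Splits ((minpoly k x).map (algebraMap k L)) := Normal.splits inferInstance x
  have hne : minpoly k x ≠ 0 := minpoly.ne_zero hint
  set P := (minpoly k x).map (algebraMap k L) with hP
  have hxroot : x ∈ P.roots := by
    rw [hP, mem_roots_map hne, ← aeval_def, minpoly.aeval]
  have hall : ∀ y ∈ P.roots, y = x := by
    intro y hy
    rw [hP, mem_roots_map hne, ← aeval_def] at hy
    obtain ⟨σ, hσ⟩ := minpoly.exists_algEquiv_of_root (x := y) hint.isAlgebraic hy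
    have h1 : y = σ.symm x := by rw [← hσ, AlgEquiv.symm_apply_apply]
    rw [h1, hx σ.symm]
  have hnodup : P.roots.Nodup := nodup_roots hsep.map
  have hcard : (minpoly k x).natDegree = Multiset.card P.roots :=
    (natDegree_map (algebraMap k L)).symm.trans hsplit.natDegree_eq_card_roots
  have hcount : Multiset.count x P.roots = Multiset.card P.roots :=
    Multiset.count_eq_card.mpr fun y hy => (hall y hy).symm
  have hle : Multiset.count x P.roots ≤ 1 := Multiset.nodup_iff_count_le_one.mp hnodup x
  have hpos1 : 0 < Multiset.count x P.roots := Multiset.count_pos.mpr hxroot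
  have hpos : 0 < (minpoly k x).natDegree := minpoly.natDegree_pos hint
  have hdeg : (minpoly k x).natDegree = 1 := by omega
  obtain ⟨a, ha⟩ := minpoly.natDegree_eq_one_iff.mp hdeg
  exact ⟨a, ha⟩

/-- Let `L/k` be a Galois field extension (possibly infinite) with Galois group `G`,
and let `V` be a `k`-vector space, with `G` acting on `V ⊗[k] L` by
`g • (v ⊗ a) = v ⊗ g a`.  Then the canonical `k`-linear map `V → V ⊗[k] L`,
`v ↦ v ⊗ 1`, is injective and its image is exactly the subspace of `G`-invariant
elements. -/
theorem stmt_0 (k L : Type*) [Field k] [Field L] [Algebra k L] [IsGalois k L]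
    (V : Type*) [AddCommGroup V] [Module k V] :
    Function.Injective (fun v : V => v ⊗ₜ[k] (1 : L)) ∧
    Set.range (fun v : V => v ⊗ₜ[k] (1 : L)) =
      {x : V ⊗[k] L | ∀ g : (L ≃ₐ[k] L), LinearMap.lTensor V g.toLinearMap x = x} := by
  classical
  set ι := Module.Basis.ofVectorSpaceIndex k V
  set b : Module.Basis ι k V := Module.Basis.ofVectorSpace k V
  set e : (V ⊗[k] L) ≃ₗ[k] (ι →₀ L) :=
    (TensorProduct.congr b.repr (LinearEquiv.refl k L)).trans
      (TensorProduct.finsuppScalarLeft k L ι) with he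
  have he_tmul : ∀ (v : V) (a : L) (i : ι), e (v ⊗ₜ[k] a) i = b.repr v i • a := by
    intro v a i
    simp [he, TensorProduct.finsuppScalarLeft_apply_tmul_apply]
  have hcomm : ∀ (g : L ≃ₐ[k] L) (x : V ⊗[k] L) (i : ι),
      e (LinearMap.lTensor V g.toLinearMap x) i = g (e x i) := by
    intro g x i
    induction x using TensorProduct.induction_on with
    | zero => simp
    | tmul v a =>
      rw [LinearMap.lTensor_tmul, he_tmul, he_tmul]
      simp [Algebra.smul_def]
    | add x y hx hy => simp [map_add, hx, hy]
  constructor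
  · intro v w hvw
    apply b.repr.injective
    ext i
    have := congrArg (fun z => e z i) hvw
    simp only [he_tmul] at this
    rw [Algebra.smul_def, Algebra.smul_def, mul_one, mul_one] at this
    exact (algebraMap k L).injective this
  · ext x
    simp only [Set.mem_range, Set.mem_setOf_eq]
    constructor
    · rintro ⟨v, rfl⟩ g
      rw [LinearMap.lTensor_tmul]
      simp
    · intro hfix
      set c : ι →₀ L := e x with hc
      have hfix' : ∀ (g : L ≃ₐ[k] L) (i : ι), g (c i) = c i := by
        intro g i
        rw [hc, ← hcomm g x i, hfix g]
      have hmem : ∀ i : ι, ∃ a : k, algebraMap k L a = c i := by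
        intro i
        exact aux_fixed_mem (fun σ => hfix' σ i)
      -- build a finsupp of coefficients in k
      let s : L → k := fun y => if h : ∃ a : k, algebraMap k L a = y then h.choose else 0
      have hs : ∀ i : ι, algebraMap k L (s (c i)) = c i := by
        intro i
        have h := hmem i
        simp only [s, dif_pos h]
        exact h.choose_spec
      have hs0 : s 0 = 0 := by
        have h : ∃ a : k, algebraMap k L a = (0 : L) := ⟨0, map_zero _⟩
        simp only [s, dif_pos h]
        exact (algebraMap k L).injective (by rw [h.choose_spec, map_zero])
      refine ⟨b.repr.symm (c.mapRange s hs0), ?_⟩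
      apply e.injective
      ext i
      rw [he_tmul]
      simp only [Module.Basis.repr_symm_apply, Module.Basis.repr_linearCombination, Finsupp.mapRange_apply]
      rw [Algebra.smul_def, mul_one, hs i, ← hc]
end

section
/- Let π : X → Y be a dominant morphism of integral schemes, let η be the generic point of Y and κ(η) its residue field. Then the generic fiber X_η = X ×_Y Spec κ(η), the pullback of π along the canonical morphism Spec κ(η) → Y, is an integral scheme (nonempty, reduced and irreducible). -/
open AlgebraicGeometry CategoryTheory CategoryTheory.Limits

lemma commRingCat_hom_injective_of_isField {A B : CommRingCat} (hA : IsField ↑A)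
    [Nontrivial ↑B] (f : A ⟶ B) : Function.Injective f := by
  intro u v huv
  by_contra hne
  obtain ⟨b, hb⟩ := hA.mul_inv_cancel (sub_ne_zero.mpr hne)
  have h1 : f ((u - v) * b) = 1 := by rw [hb, f.hom.map_one]
  rw [f.hom.map_mul, f.hom.map_sub, huv, sub_self, zero_mul] at h1
  exact zero_ne_one h1

lemma stalkSpecializes_injective_of_genericPoint {X : Scheme} [IsIntegral X] {x y : X}
    (h : x ⤳ y) (hx : x = genericPoint X) :
    Function.Injective (X.presheaf.stalkSpecializes h) := by
  subst hx
  have : algebraMap (X.presheaf.stalk y) X.functionField = (X.presheaf.stalkSpecializes h).hom :=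
    RingHom.algebraMap_toAlgebra _
  change Function.Injective (X.presheaf.stalkSpecializes h).hom
  rw [← this]
  exact IsFractionRing.injective _ _

/-- Let `π : X → Y` be a dominant morphism of integral schemes, let `η` be the
generic point of `Y` and `κ(η)` its residue field.  Then the generic fiber
`X_η = X ×_Y Spec κ(η)`, the pullback of `π` along the canonical morphism
`Spec κ(η) → Y`, is an integral scheme. -/
theorem stmt_6 (X Y : Scheme) [IsIntegral X] [IsIntegral Y]
    (π : X ⟶ Y) [IsDominant π] :
    IsIntegral (pullback π (Y.fromSpecResidueField (genericPoint Y))) := by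
  set η := genericPoint Y with hη
  set g := Y.fromSpecResidueField η with hgdef
  haveI : IsPreimmersion (pullback.fst π g) :=
    inferInstance
  have hemb := (pullback.fst π g).isEmbedding
  -- the generic point of X maps to η
  have hπξ : π.base (genericPoint X) = η := by
    have hd : DenseRange π.base := π.denseRange
    have h1 : Set.range π.base ⊆ closure {π.base (genericPoint X)} := by
      rintro _ ⟨z, rfl⟩
      exact (((genericPoint_spec X).specializes trivial).map π.base.hom.continuous).mem_closure
    have h2 : closure {π.base (genericPoint X)} = Set.univ :=
      Set.eq_univ_of_univ_subset <| by
        calc Set.univ = closure (Set.range π.base) := hd.closure_range.symm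
        _ ⊆ closure (closure {π.base (genericPoint X)}) := closure_mono h1
        _ = closure {π.base (genericPoint X)} := closure_closure
    exact (show IsGenericPoint (π.base (genericPoint X)) ⊤ from h2).eq (genericPoint_spec Y)
  -- a point of the pullback above the generic point of X
  obtain ⟨y₀⟩ : Nonempty (Spec (Y.residueField η)) := inferInstance
  obtain ⟨p₀, hp₀, -⟩ := Scheme.Pullback.exists_preimage_pullback (f := π) (g := g)
    (genericPoint X) y₀ (by simp [hgdef, hπξ])
  haveI : Nonempty ↑(pullback π g) := ⟨p₀⟩
  -- irreducibility
  have hS : IsIrreducible (Set.range (pullback.fst π g).base) := by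
    rw [← isIrreducible_iff_closure]
    have h1 : closure (Set.range (pullback.fst π g).base) = Set.univ :=
      Set.eq_univ_of_univ_subset <| by
        calc Set.univ = closure {genericPoint X} := ((genericPoint_spec X).def).symm
        _ ⊆ closure (Set.range (pullback.fst π g).base) :=
            closure_mono (Set.singleton_subset_iff.mpr ⟨p₀, hp₀⟩)
    rw [h1]
    exact IrreducibleSpace.isIrreducible_univ X
  haveI hIS : IrreducibleSpace ↥(Set.range (pullback.fst π g).base) :=
    Subtype.irreducibleSpace hS
  haveI hirr : IrreducibleSpace ↑(pullback π g) := by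
    rw [irreducibleSpace_def]
    let e := hemb.toHomeomorph
    have := (IrreducibleSpace.isIrreducible_univ ↥(Set.range (pullback.fst π g).base)).image
      e.symm (e.symm.continuous.continuousOn)
    rwa [Set.image_univ, e.symm.surjective.range_eq] at this
  -- reducedness
  haveI hred : ∀ p : ↑(pullback π g), _root_.IsReduced ((pullback π g).presheaf.stalk p) := by
    intro p
    set ζ := genericPoint ↑(pullback π g) with hζdef
    have h1 : ζ ⤳ p := (genericPoint_spec _).specializes trivial
    have h0 : ζ ⤳ p₀ := (genericPoint_spec _).specializes trivial
    -- fst maps ζ to the generic point of X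
    have hζ : (pullback.fst π g).base ζ = genericPoint X := by
      have hmem : genericPoint X ∈ closure {(pullback.fst π g).base ζ} := by
        rw [← hp₀]
        exact (h0.map (pullback.fst π g).base.hom.continuous).mem_closure
      have : closure {(pullback.fst π g).base ζ} = Set.univ :=
        Set.eq_univ_of_univ_subset <| by
          calc Set.univ = closure {genericPoint X} := ((genericPoint_spec X).def).symm
          _ ⊆ closure {(pullback.fst π g).base ζ} :=
              closure_minimal (Set.singleton_subset_iff.mpr hmem) isClosed_closure
      exact (show IsGenericPoint _ ⊤ from this).eq (genericPoint_spec X)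
    -- the stalk map of fst at p is bijective
    have hsurj : Function.Surjective ((pullback.fst π g).stalkMap p) :=
      (pullback.fst π g).stalkMap_surjective p
    have hinj : Function.Injective ((pullback.fst π g).stalkMap p) := by
      rw [injective_iff_map_eq_zero]
      intro a ha
      have key := Scheme.Hom.stalkSpecializes_stalkMap_apply (pullback.fst π g) ζ p h1 a
      rw [ha, map_zero] at key
      -- the stalk at fst ζ is a field
      have hfield : IsField ↑(X.presheaf.stalk ((pullback.fst π g).base ζ)) := by
        rw [hζ]; exact Field.toIsField X.functionField
      have hinj2 : Function.Injective ((pullback.fst π g).stalkMap ζ) :=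
        commRingCat_hom_injective_of_isField hfield _
      have : X.presheaf.stalkSpecializes ((pullback.fst π g).base.hom.map_specializes h1) a = 0 := by
        apply hinj2
        rw [key, ((pullback.fst π g).stalkMap ζ).hom.map_zero]
      apply stalkSpecializes_injective_of_genericPoint _ hζ
      rw [this,
        (X.presheaf.stalkSpecializes ((pullback.fst π g).base.hom.map_specializes h1)).hom.map_zero]
    have e := RingEquiv.ofBijective ((pullback.fst π g).stalkMap p).hom ⟨hinj, hsurj⟩
    exact isReduced_of_injective e.symm.toRingHom e.symm.injective
  haveI : IsReduced (pullback π g) := isReduced_of_isReduced_stalk _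
  exact isIntegral_of_irreducibleSpace_of_isReduced _
end
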